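/- Let G be a graph, F ⊆ E^G, and let Δ be a drawing of G in which no edge of F is involved in any crossing. Suppose Δ has at least one crossing, say x ∈ Δ(e1) ∩ Δ(e2) for distinct edges e1, e2. Then e1, e2 ∉ F, and the graph G^{e1×e2} has a drawing with at most (crossing number of Δ) − 1 crossings in which no edge of F is involved in any crossing. In particular, if l ≥ 1 and G has an l-good drawing with respect to F that has at least one crossing, then there exist distinct edges e1, e2 ∈ E^G ∖ F such that G^{e1×e2} has an (l−1)-good drawing with respect to F. -/

import Mathlib

lemma sym2_out_eq {α : Type} (s : Sym2 α) : s = s((Quot.out s).1, (Quot.out s).2) := by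
  exact (Quot.out_eq s).symm

lemma sym2_out_fst_mem {α : Type} (s : Sym2 α) : (Quot.out s).1 ∈ s := by
  set p := Quot.out s with hp
  rw [sym2_out_eq s, ← hp]
  exact Sym2.mem_mk_left _ _

lemma sym2_out_snd_mem {α : Type} (s : Sym2 α) : (Quot.out s).2 ∈ s := by
  set p := Quot.out s with hp
  rw [sym2_out_eq s, ← hp]
  exact Sym2.mem_mk_right _ _

lemma sym2_out_ne {α : Type} (s : Sym2 α) (h : ¬ s.IsDiag) : (Quot.out s).1 ≠ (Quot.out s).2 := by
  intro he
  exact h (by rw [sym2_out_eq s]; exact Sym2.mk_isDiag_iff.mpr he)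

/-! ### Basic multigraphs -/

/-- A multigraph: undirected, loop-free, possibly with multiple (parallel) edges.
Each edge is assigned its unordered pair of (distinct) endpoints. -/
structure MGraph where
  V : Type
  E : Type
  ends : E → Sym2 V
  loopless : ∀ e : E, ¬ (ends e).IsDiag

namespace MGraph

/-- Walks in a multigraph. -/
inductive Walk (G : MGraph) : G.V → G.V → Type where
  | nil (v : G.V) : Walk G v v
  | cons {u v w : G.V} (e : G.E) (he : G.ends e = s(u, v)) (p : Walk G v w) : Walk G u w

namespace Walk

variable {G : MGraph}

/-- The list of vertices visited by a walk (in order, including both endpoints). -/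
def support : ∀ {u v : G.V}, G.Walk u v → List G.V
  | u, _, .nil _ => [u]
  | u, _, .cons _ _ p => u :: p.support

/-- The list of edges traversed by a walk. -/
def edgeList : ∀ {u v : G.V}, G.Walk u v → List G.E
  | _, _, .nil _ => []
  | _, _, .cons e _ p => e :: p.edgeList

lemma start_mem_support : ∀ {u v : G.V} (w : G.Walk u v), u ∈ w.support
  | _, _, .nil _ => List.mem_singleton_self _
  | _, _, .cons _ _ _ => List.mem_cons_self

lemma end_mem_support : ∀ {u v : G.V} (w : G.Walk u v), v ∈ w.support
  | _, _, .nil _ => List.mem_singleton_self _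
  | _, _, .cons _ _ p => List.mem_cons_of_mem _ (end_mem_support p)

lemma mem_support_of_mem_edgeList :
    ∀ {u v : G.V} (w : G.Walk u v) (f : G.E) (x : G.V),
      f ∈ w.edgeList → x ∈ G.ends f → x ∈ w.support
  | _, _, .nil _, f, x, hf, _ => by simp [edgeList] at hf
  | u, v, .cons e he p, f, x, hf, hx => by
      rcases List.mem_cons.mp hf with h | h
      · subst h
        rw [he, Sym2.mem_iff] at hx
        rcases hx with rfl | rfl
        · exact start_mem_support _
        · exact List.mem_cons_of_mem _ (start_mem_support p)
      · exact List.mem_cons_of_mem _ (mem_support_of_mem_edgeList p f x h hx)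

/-- A walk is a path if it visits no vertex twice. -/
def IsPath {u v : G.V} (w : G.Walk u v) : Prop := w.support.Nodup

/-- A closed walk is a cycle if it is nontrivial, repeats no edge,
and repeats no vertex except the first = last one. -/
def IsCycleW {u : G.V} (w : G.Walk u u) : Prop :=
  w.edgeList ≠ [] ∧ w.edgeList.Nodup ∧ w.support.tail.Nodup

end Walk

/-! ### Subgraphs -/

/-- A subgraph of `G`, given by a set of vertices and a set of edges all of whose
endpoints belong to the vertex set. -/
structure Subgraph (G : MGraph) where
  verts : Set G.V
  edges : Set G.E
  closed : ∀ e ∈ edges, ∀ v ∈ G.ends e, v ∈ verts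

namespace Subgraph

variable {G : MGraph}

/-- The subgraph consisting of all of `G`. -/
def top (G : MGraph) : G.Subgraph where
  verts := Set.univ
  edges := Set.univ
  closed := fun _ _ _ _ => Set.mem_univ _

/-- Union of two subgraphs. -/
def union (A B : G.Subgraph) : G.Subgraph where
  verts := A.verts ∪ B.verts
  edges := A.edges ∪ B.edges
  closed := by
    rintro e (he | he) v hv
    · exact Or.inl (A.closed e he v hv)
    · exact Or.inr (B.closed e he v hv)

/-- Union of a set of subgraphs. -/
def sUnion (𝒮 : Set G.Subgraph) : G.Subgraph where
  verts := ⋃ S ∈ 𝒮, S.verts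
  edges := ⋃ S ∈ 𝒮, S.edges
  closed := by
    intro e he v hv
    simp only [Set.mem_iUnion] at he ⊢
    obtain ⟨S, hS, heS⟩ := he
    exact ⟨S, hS, S.closed e heS v hv⟩

/-- Delete a set of vertices (and all edges touching them) from a subgraph. -/
def delete (S : G.Subgraph) (A : Set G.V) : G.Subgraph where
  verts := S.verts \ A
  edges := {e ∈ S.edges | ∀ v ∈ G.ends e, v ∉ A}
  closed := fun e he v hv => ⟨S.closed e he.1 v hv, he.2 v hv⟩

/-- The subgraph, viewed as a graph in its own right. -/
def toGraph (S : G.Subgraph) : MGraph where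
  V := {v : G.V // v ∈ S.verts}
  E := {e : G.E // e ∈ S.edges}
  ends := fun e => (G.ends e.val).attachWith (fun v hv => S.closed e.val e.2 v hv)
  loopless := by
    intro e he
    have h2 := Sym2.IsDiag.map (f := Subtype.val) he
    rw [Sym2.attachWith_map_subtypeVal] at h2
    exact G.loopless e.val h2

lemma toGraph_ends {S : G.Subgraph} (e : S.toGraph.E) {v w : G.V}
    (hvw : G.ends e.val = s(v, w)) (hv : v ∈ S.verts) (hw : w ∈ S.verts) :
    S.toGraph.ends e = s((⟨v, hv⟩ : {v : G.V // v ∈ S.verts}), ⟨w, hw⟩) := by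
  apply Sym2.map.injective Subtype.val_injective
  show Sym2.map Subtype.val ((G.ends e.val).attachWith _) = _
  rw [Sym2.attachWith_map_subtypeVal, Sym2.map_pair_eq, hvw]

lemma toGraph_mem_ends {S : G.Subgraph} (e : S.toGraph.E) (x : S.toGraph.V) :
    x ∈ S.toGraph.ends e ↔ x.val ∈ G.ends e.val := by
  constructor
  · intro hx
    have h2 : x.val ∈ Sym2.map Subtype.val (S.toGraph.ends e) :=
      Sym2.mem_map.mpr ⟨x, hx, rfl⟩
    rwa [show Sym2.map Subtype.val (S.toGraph.ends e) = G.ends e.val from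
      Sym2.attachWith_map_subtypeVal _] at h2
  · intro hx
    have h2 : x.val ∈ Sym2.map Subtype.val (S.toGraph.ends e) := by
      rwa [show Sym2.map Subtype.val (S.toGraph.ends e) = G.ends e.val from
        Sym2.attachWith_map_subtypeVal _]
    obtain ⟨y, hy, hyx⟩ := Sym2.mem_map.mp h2
    rwa [show y = x from Subtype.ext hyx] at hy

/-- Reachability within a subgraph: a walk of `G` all of whose vertices and
edges belong to the subgraph. -/
def Reach (S : G.Subgraph) (u v : G.V) : Prop :=
  ∃ w : G.Walk u v, (∀ x ∈ w.support, x ∈ S.verts) ∧ ∀ e ∈ w.edgeList, e ∈ S.edges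

/-- A subgraph is connected if it is nonempty and any two of its vertices are
joined by a walk inside it. -/
def Connected (S : G.Subgraph) : Prop :=
  S.verts.Nonempty ∧ ∀ u ∈ S.verts, ∀ v ∈ S.verts, S.Reach u v

end Subgraph

/-- The induced subgraph on a vertex set `A`. -/
def induce (G : MGraph) (A : Set G.V) : G.Subgraph where
  verts := A
  edges := {e | ∀ v ∈ G.ends e, v ∈ A}
  closed := fun _ he v hv => he v hv

/-- `G ∖ A`: delete the vertices in `A`, keeping only edges with no endpoint in `A`. -/
def deleteVerts (G : MGraph) (A : Set G.V) : G.Subgraph :=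
  G.induce Aᶜ

end MGraph
/-! ### Drawings in the plane -/

/-- A drawing of a graph in the plane.  Every vertex is assigned a point and every
edge a simple curve (given by an injective continuous parametrization on `[0,1]`)
joining the images of its endpoints; distinct vertices get distinct points;
distinct edge curves meet in at most one interior point; no curve passes through the
image of a vertex other than its endpoints; and no point which is not the image of a
vertex lies on more than two edge curves. -/
structure Drawing (G : MGraph) where
  vpos : G.V → ℝ × ℝ
  par : G.E → ℝ → ℝ × ℝ
  par_cont : ∀ e, ContinuousOn (par e) (Set.Icc 0 1)
  par_inj : ∀ e, Set.InjOn (par e) (Set.Icc 0 1)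
  ends_match : ∀ e, ∃ v w : G.V, G.ends e = s(v, w) ∧ par e 0 = vpos v ∧ par e 1 = vpos w
  vpos_inj : Function.Injective vpos
  arcs_inter : ∀ e f : G.E, e ≠ f →
    Set.Subsingleton (par e '' Set.Ioo 0 1 ∩ par f '' Set.Ioo 0 1)
  vertex_on_arc : ∀ (e : G.E) (v : G.V), vpos v ∈ par e '' Set.Icc 0 1 → v ∈ G.ends e
  at_most_two : ∀ x : ℝ × ℝ, x ∉ Set.range vpos →
    ∀ e₁ e₂ e₃ : G.E, x ∈ par e₁ '' Set.Icc 0 1 → x ∈ par e₂ '' Set.Icc 0 1 →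
      x ∈ par e₃ '' Set.Icc 0 1 → e₁ = e₂ ∨ e₁ = e₃ ∨ e₂ = e₃

namespace Drawing

variable {G : MGraph}

/-- The curve drawn for the edge `e`. -/
def arc (Δ : Drawing G) (e : G.E) : Set (ℝ × ℝ) := Δ.par e '' Set.Icc 0 1

/-- A crossing of a drawing: a point which is not the image of a vertex and lies on
two distinct edge curves. -/
def IsCrossing (Δ : Drawing G) (x : ℝ × ℝ) : Prop :=
  x ∉ Set.range Δ.vpos ∧ ∃ e f : G.E, e ≠ f ∧ x ∈ Δ.arc e ∧ x ∈ Δ.arc f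

/-- The set of crossings of a drawing. -/
def crossings (Δ : Drawing G) : Set (ℝ × ℝ) := {x | Δ.IsCrossing x}

/-- The drawing has at most `k` crossings. -/
def CrossingsAtMost (Δ : Drawing G) (k : ℕ) : Prop :=
  Δ.crossings.Finite ∧ Δ.crossings.ncard ≤ k

/-- The edge `e` is involved in some crossing of the drawing. -/
def Involved (Δ : Drawing G) (e : G.E) : Prop :=
  ∃ x : ℝ × ℝ, Δ.IsCrossing x ∧ x ∈ Δ.arc e

/-- An `l`-good drawing with respect to a set `F` of forbidden edges:
at most `l` crossings, and no forbidden edge is involved in any crossing. -/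
def IsGood (Δ : Drawing G) (l : ℕ) (F : Set G.E) : Prop :=
  Δ.CrossingsAtMost l ∧ ∀ e ∈ F, ¬ Δ.Involved e

/-- The image of a subgraph under a drawing: all vertex points and edge curves of
the subgraph. -/
def subImage (Δ : Drawing G) (S : G.Subgraph) : Set (ℝ × ℝ) :=
  Δ.vpos '' S.verts ∪ ⋃ e ∈ S.edges, Δ.arc e

/-- The restriction of a drawing to a subgraph. -/
def restrict (Δ : Drawing G) (S : G.Subgraph) : Drawing S.toGraph where
  vpos := fun v => Δ.vpos v.val
  par := fun e => Δ.par e.val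
  par_cont := fun e => Δ.par_cont e.val
  par_inj := fun e => Δ.par_inj e.val
  ends_match := by
    intro e
    obtain ⟨v, w, hvw, h0, h1⟩ := Δ.ends_match e.val
    have hv : v ∈ S.verts := S.closed e.val e.2 v (by rw [hvw]; exact Sym2.mem_mk_left _ _)
    have hw : w ∈ S.verts := S.closed e.val e.2 w (by rw [hvw]; exact Sym2.mem_mk_right _ _)
    exact ⟨⟨v, hv⟩, ⟨w, hw⟩, MGraph.Subgraph.toGraph_ends e hvw hv hw, h0, h1⟩
  vpos_inj := fun v w h => Subtype.ext (Δ.vpos_inj h)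
  arcs_inter := fun e f hef =>
    Δ.arcs_inter e.val f.val (fun h => hef (Subtype.ext h))
  vertex_on_arc := by
    intro e v hv
    exact (MGraph.Subgraph.toGraph_mem_ends e v).mpr (Δ.vertex_on_arc e.val v.val hv)
  at_most_two := by
    intro x hx e₁ e₂ e₃ h₁ h₂ h₃
    by_cases hxr : x ∈ Set.range Δ.vpos
    · obtain ⟨u, hu⟩ := hxr
      have hu1 : u ∈ G.ends e₁.val := Δ.vertex_on_arc e₁.val u (by rw [hu]; exact h₁)
      have huS : u ∈ S.verts := S.closed e₁.val e₁.2 u hu1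
      exact absurd ⟨⟨u, huS⟩, hu⟩ hx
    · rcases Δ.at_most_two x hxr e₁.val e₂.val e₃.val h₁ h₂ h₃ with h | h | h
      · exact Or.inl (Subtype.ext h)
      · exact Or.inr (Or.inl (Subtype.ext h))
      · exact Or.inr (Or.inr (Subtype.ext h))

end Drawing

namespace MGraph

/-- A graph is planar if it has a drawing without crossings. -/
def IsPlanar (G : MGraph) : Prop := ∃ Δ : Drawing G, Δ.crossings = ∅

/-- The crossing number of `G` is at most `k`. -/
def CrossingNumberLE (G : MGraph) (k : ℕ) : Prop :=
  ∃ Δ : Drawing G, Δ.CrossingsAtMost k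

end MGraph

/-- A simple closed curve in the plane: a continuous injective image of a circle. -/
def IsSimpleClosedCurve (s : Set (ℝ × ℝ)) : Prop :=
  ∃ f : AddCircle (1 : ℝ) → ℝ × ℝ, Continuous f ∧ Function.Injective f ∧ Set.range f = s
/-! ### H-components -/

namespace MGraph

variable {G : MGraph}

/-- The subgraph consisting of a single edge together with its endpoints. -/
def edgeComp (G : MGraph) (e : G.E) : G.Subgraph where
  verts := {v | v ∈ G.ends e}
  edges := {e}
  closed := by
    rintro f rfl v hv
    exact hv

/-- For a subgraph `H` of `G` and a vertex `u ∉ H`, the `H`-component of `G`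
determined by `u`: the connected component of `G ∖ H` containing `u`, together with
all edges joining it to `H` and their endpoints in `H`. -/
def attachComp (G : MGraph) (H : G.Subgraph) (u : G.V) : G.Subgraph where
  verts := {v | (G.deleteVerts H.verts).Reach u v} ∪
    {v | v ∈ H.verts ∧ ∃ (e : G.E) (w : G.V), G.ends e = s(w, v) ∧
      (G.deleteVerts H.verts).Reach u w}
  edges := {e | e ∈ (G.deleteVerts H.verts).edges ∧
      ∀ v ∈ G.ends e, (G.deleteVerts H.verts).Reach u v} ∪
    {e | ∃ (w v : G.V), G.ends e = s(w, v) ∧ (G.deleteVerts H.verts).Reach u w ∧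
      v ∈ H.verts}
  closed := by
    rintro e (⟨-, he⟩ | ⟨w, v, hwv, hw, hv⟩) x hx
    · exact Or.inl (he x hx)
    · rw [hwv, Sym2.mem_iff] at hx
      rcases hx with rfl | rfl
      · exact Or.inl hw
      · exact Or.inr ⟨hv, e, w, hwv, hw⟩

/-- `C` is an `H`-component of `G`: either a connected component of `G ∖ H` together
with the edges joining it to `H` and their endpoints in `H`, or a single edge of
`G` outside `H` with both endpoints in `H`, together with its endpoints. -/
def IsHComp (G : MGraph) (H C : G.Subgraph) : Prop :=
  (∃ u : G.V, u ∉ H.verts ∧ C = G.attachComp H u) ∨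
  (∃ e : G.E, e ∉ H.edges ∧ (∀ v ∈ G.ends e, v ∈ H.verts) ∧ C = G.edgeComp e)

/-! ### Graph embeddings (subgraph copies) -/

/-- An embedding of the graph `H` into the graph `G`: injective maps on vertices and
edges that respect endpoints.  The image is a subgraph of `G` isomorphic to `H`. -/
structure Emb (H G : MGraph) where
  vmap : H.V → G.V
  emap : H.E → G.E
  vmap_inj : Function.Injective vmap
  emap_inj : Function.Injective emap
  ends_map : ∀ e : H.E, G.ends (emap e) = (H.ends e).map vmap

end MGraph

/-! ### Topological embeddings -/

/-- A topological embedding of `H` into `G`: an injective map on vertices together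
with, for every edge `e` of `H`, a path in `G` (recorded by its vertex set
`pVerts e` and edge set `pEdges e`) joining the images of the endpoints of `e` and
avoiding the images of all other vertices, such that the paths of distinct edges are
internally disjoint. -/
structure TopEmb (H G : MGraph) where
  vmap : H.V → G.V
  vmap_inj : Function.Injective vmap
  pVerts : H.E → Set G.V
  pEdges : H.E → Set G.E
  is_path : ∀ e : H.E, ∃ (a b : H.V) (w : G.Walk (vmap a) (vmap b)),
    H.ends e = s(a, b) ∧ w.IsPath ∧
    pVerts e = {x | x ∈ w.support} ∧ pEdges e = {f | f ∈ w.edgeList} ∧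
    ∀ u : H.V, u ∉ H.ends e → vmap u ∉ w.support
  int_disjoint : ∀ e f : H.E, e ≠ f → ∀ x ∈ pVerts e ∩ pVerts f,
    ∃ a : H.V, a ∈ H.ends e ∧ a ∈ H.ends f ∧ x = vmap a
  edge_disjoint : ∀ e f : H.E, e ≠ f → pEdges e ∩ pEdges f = ∅

namespace TopEmb

variable {H G : MGraph}

/-- The image `h(S)` of a subgraph `S ⊆ H` under a topological embedding `h`. -/
def imageOf (h : TopEmb H G) (S : H.Subgraph) : G.Subgraph where
  verts := (h.vmap '' S.verts) ∪ ⋃ e ∈ S.edges, h.pVerts e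
  edges := ⋃ e ∈ S.edges, h.pEdges e
  closed := by
    intro f hf v hv
    simp only [Set.mem_iUnion] at hf
    obtain ⟨e, he, hfe⟩ := hf
    obtain ⟨a, b, w, -, -, hV, hE, -⟩ := h.is_path e
    right
    simp only [Set.mem_iUnion]
    refine ⟨e, he, ?_⟩
    rw [hV]
    rw [hE] at hfe
    exact MGraph.Walk.mem_support_of_mem_edgeList w f v hfe hv

/-- The image `h(H)` of a topological embedding. -/
def image (h : TopEmb H G) : G.Subgraph := h.imageOf (MGraph.Subgraph.top H)

end TopEmb
/-! ### Hexagonal grids -/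

/-- The vertex type of the hexagonal grid of radius `r`: the vertices are arranged on
`r` concentric principal cycles, the `i`-th of which (counting from the inside,
starting at `i = 0`) has `6 * (2 * i + 1)` vertices. -/
abbrev HexV (r : ℕ) : Type := (i : Fin r) × ZMod (6 * (2 * i.val + 1))

/-- The endpoint on the `i`-th principal cycle of the `k`-th spoke joining the `i`-th
and the `(i+1)`-st principal cycle. -/
def spokeOutV (r : ℕ) (i : Fin (r - 1)) (k : ℕ) : HexV r :=
  ⟨⟨i.val, by have := i.isLt; omega⟩,
    ((k / (i.val + 1)) * (2 * i.val + 1) + 2 * (k % (i.val + 1)) : ℕ)⟩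

/-- The endpoint on the `(i+1)`-st principal cycle of the `k`-th spoke joining the
`i`-th and the `(i+1)`-st principal cycle. -/
def spokeInV (r : ℕ) (i : Fin (r - 1)) (k : ℕ) : HexV r :=
  ⟨⟨i.val + 1, by have := i.isLt; omega⟩,
    ((k / (i.val + 1)) * (2 * (i.val + 1) + 1) + 2 * (k % (i.val + 1)) + 1 : ℕ)⟩

/-- The hexagonal grid of radius `r` (`r` concentric cycles of hexagons): its vertices
lie on `r` principal cycles, the `i`-th principal cycle (0-indexed) having
`6 * (2 * i + 1)` vertices and being joined to the next one by `6 * (i + 1)` spokes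
attached alternatingly. -/
def hexGrid (r : ℕ) : MGraph where
  V := HexV r
  E := ((i : Fin r) × ZMod (6 * (2 * i.val + 1))) ⊕ ((i : Fin (r - 1)) × ZMod (6 * (i.val + 1)))
  ends := fun e => match e with
    | .inl ⟨i, j⟩ => s((⟨i, j⟩ : HexV r), ⟨i, j + 1⟩)
    | .inr ⟨i, k⟩ => s(spokeOutV r i k.val, spokeInV r i k.val)
  loopless := by
    rintro (⟨i, j⟩ | ⟨i, k⟩) h
    · rw [Sym2.mk_isDiag_iff] at h
      have hj : j = j + 1 := eq_of_heq (Sigma.ext_iff.mp h).2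
      have h1 : (1 : ZMod (6 * (2 * i.val + 1))) = 0 := left_eq_add.mp hj
      haveI : Fact (1 < 6 * (2 * i.val + 1)) := ⟨by omega⟩
      exact one_ne_zero h1
    · rw [Sym2.mk_isDiag_iff] at h
      have := congrArg (fun v : HexV r => v.1.val) h
      simp [spokeOutV, spokeInV] at this

@[simp] lemma hexGrid_ends_inl (r : ℕ) (i : Fin r) (j : ZMod (6 * (2 * i.val + 1))) :
    (hexGrid r).ends (Sum.inl ⟨i, j⟩) = s((⟨i, j⟩ : HexV r), ⟨i, j + 1⟩) := rfl

@[simp] lemma hexGrid_ends_inr (r : ℕ) (i : Fin (r - 1)) (k : ZMod (6 * (i.val + 1))) :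
    (hexGrid r).ends (Sum.inr ⟨i, k⟩) = s(spokeOutV r i k.val, spokeInV r i k.val) := rfl

/-- The `i`-th principal cycle of the hexagonal grid of radius `r` (`i` is 0-indexed,
so `i = ⟨0, _⟩` is the innermost principal cycle `C_1` of the paper and
`i = ⟨r-1, _⟩` the outermost one `C_r`). -/
def principalCycle (r : ℕ) (i : Fin r) : (hexGrid r).Subgraph where
  verts := {v | v.1 = i}
  edges := {e | ∃ j, e = Sum.inl ⟨i, j⟩}
  closed := by
    rintro e ⟨j, rfl⟩ v hv
    replace hv := Sym2.mem_iff.mp hv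
    rcases hv with rfl | rfl <;> rfl

/-- The subgrid `H^i` of the hexagonal grid bounded by the `i`-th principal cycle:
the induced subgraph on the vertices of the principal cycles `C_1, …, C_i`. -/
def hexSubgridLE (r : ℕ) (i : Fin r) : (hexGrid r).Subgraph :=
  (hexGrid r).induce {v | v.1 ≤ i}

/-- The subgrid `H^i ∖ C_i` of the hexagonal grid: everything strictly inside the
`i`-th principal cycle. -/
def hexSubgridLT (r : ℕ) (i : Fin r) : (hexGrid r).Subgraph :=
  (hexGrid r).induce {v | v.1 < i}

namespace TopEmb

variable {G : MGraph} {r : ℕ}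

/-- An attachment of a topological embedding `h : H_r → G`: an `h(H_r)`-component of
`G` that intersects the interior `h(H_r ∖ C_r)` of `h(H_r)`. -/
def IsAttachment (h : TopEmb (hexGrid r) G) (C : G.Subgraph) : Prop :=
  G.IsHComp h.image C ∧
  (C.verts ∩ (h.imageOf ((hexGrid r).deleteVerts {v | v.1.val = r - 1})).verts).Nonempty

/-- A topological embedding `h : H_r → G` is flat if the union of `h(H_r)` with all
its attachments is planar. -/
def Flat (h : TopEmb (hexGrid r) G) : Prop :=
  ((h.image.union (MGraph.Subgraph.sUnion {C | h.IsAttachment C})).toGraph).IsPlanar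

/-- The subgraph `K_i` of `G`: the image `h(H^i)` together with all attachments of
`h(H_r)` that intersect the interior `h(H^i ∖ C_i)`. -/
def K (h : TopEmb (hexGrid r) G) (i : Fin r) : G.Subgraph :=
  (h.imageOf (hexSubgridLE r i)).union
    (MGraph.Subgraph.sUnion {C | h.IsAttachment C ∧
      (C.verts ∩ (h.imageOf (hexSubgridLT r i)).verts).Nonempty})

/-- The edge set `F_i`: all edges of `K_i` having at least one endpoint on `h(C_i)`. -/
def Fset (h : TopEmb (hexGrid r) G) (i : Fin r) : Set G.E :=
  {e | e ∈ (h.K i).edges ∧ ∃ v ∈ G.ends e, v ∈ (h.imageOf (principalCycle r i)).verts}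

/-- The subgraph `I_i = K_i ∖ h(C_i)`: delete from `K_i` all vertices of `h(C_i)` and
all edges incident with them. -/
def Iset (h : TopEmb (hexGrid r) G) (i : Fin r) : G.Subgraph :=
  (h.K i).delete (h.imageOf (principalCycle r i)).verts

end TopEmb
/-! ### Graph constructions -/

namespace MGraph

open Classical in
/-- The graph obtained from `G` by contracting the (induced) subgraph on a vertex set
`A` to a single new vertex: all vertices of `A` and all edges with both endpoints in
`A` are deleted, a new vertex (the vertex `Sum.inr ()`) is added, and every edge with
exactly one endpoint in `A` now joins its other endpoint to the new vertex. -/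
noncomputable def contract (G : MGraph) (A : Set G.V) : MGraph where
  V := {v : G.V // v ∉ A} ⊕ Unit
  E := {e : G.E // ∃ v ∈ G.ends e, v ∉ A}
  ends := fun e => (G.ends e.val).map
    (fun v => if h : v ∈ A then Sum.inr () else Sum.inl ⟨v, h⟩)
  loopless := by
    intro e he
    obtain ⟨v, hv, hvA⟩ := e.2
    obtain ⟨⟨a, b⟩, hab⟩ := Quot.exists_rep (G.ends e.val)
    have hab' : G.ends e.val = s(a, b) := hab.symm
    have hne : a ≠ b := fun hh => G.loopless e.val (by rw [hab']; exact Sym2.mk_isDiag_iff.mpr hh)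
    rw [hab'] at he hv
    rw [Sym2.map_pair_eq, Sym2.mk_isDiag_iff] at he
    rw [Sym2.mem_iff] at hv
    by_cases ha : a ∈ A <;> by_cases hb : b ∈ A
    · rcases hv with rfl | rfl <;> exact hvA (by assumption)
    · rw [dif_pos ha, dif_neg hb] at he; exact absurd he (by simp)
    · rw [dif_neg ha, dif_pos hb] at he; exact absurd he (by simp)
    · rw [dif_neg ha, dif_neg hb] at he
      exact hne (congrArg Subtype.val (Sum.inl_injective he))

/-- The graph `G^{e₁ × e₂}` obtained from `G` by crossing the two distinct edges
`e₁` and `e₂`: delete `e₁` and `e₂`, add a new vertex (the vertex `Sum.inr ()`), and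
add four new edges joining the new vertex to the two endpoints of `e₁` and to the two
endpoints of `e₂`. -/
def crossAt (G : MGraph) (e₁ e₂ : G.E) : MGraph where
  V := G.V ⊕ Unit
  E := {e : G.E // e ≠ e₁ ∧ e ≠ e₂} ⊕
    {p : Fin 2 × G.V // p.2 ∈ G.ends (if p.1 = 0 then e₁ else e₂)}
  ends := fun f => match f with
    | .inl g => (G.ends g.val).map Sum.inl
    | .inr p => s(Sum.inl p.val.2, Sum.inr ())
  loopless := by
    rintro (g | p) h
    · exact G.loopless g.val ((Sym2.isDiag_map Sum.inl_injective).mp h)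
    · rw [Sym2.mk_isDiag_iff] at h
      exact absurd h (by simp)

/-- A set `F` of edges of `G`, viewed as a set of edges of `G^{e₁ × e₂}` (only
meaningful when `e₁, e₂ ∉ F`). -/
def liftF (G : MGraph) (e₁ e₂ : G.E) (F : Set G.E) : Set (G.crossAt e₁ e₂).E :=
  {f | ∃ g : {e : G.E // e ≠ e₁ ∧ e ≠ e₂}, f = Sum.inl g ∧ g.val ∈ F}

/-- The `j`-th vertex (for `0 ≤ j ≤ k`) on the path of length `k` replacing the
edge `e` in the subdivision of `G` in which every edge is subdivided `k - 1` times. -/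
noncomputable def subdivVert (G : MGraph) (k : ℕ) (e : G.E) (j : ℕ) : G.V ⊕ (G.E × Fin (k - 1)) :=
  if h0 : j = 0 then Sum.inl (Quot.out (G.ends e)).1
  else if h : j < k then Sum.inr (e, ⟨j - 1, by omega⟩)
  else Sum.inl (Quot.out (G.ends e)).2

/-- The graph `G̃` obtained from `G` by subdividing every edge `k - 1` times, that
is, replacing every edge by a path of length `k` (for `k ≥ 1`). -/
noncomputable def subdivide (G : MGraph) (k : ℕ) : MGraph where
  V := G.V ⊕ (G.E × Fin (k - 1))
  E := G.E × Fin k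
  ends := fun p => s(G.subdivVert k p.1 p.2.val, G.subdivVert k p.1 (p.2.val + 1))
  loopless := by
    rintro ⟨e, j⟩ h
    dsimp only at h
    rw [Sym2.mk_isDiag_iff] at h
    have hj : j.val < k := j.isLt
    unfold subdivVert at h
    by_cases h0 : j.val = 0
    · rw [dif_pos h0] at h
      by_cases h1 : j.val + 1 < k
      · rw [dif_neg (by omega), dif_pos h1] at h
        exact absurd h (by simp)
      · rw [dif_neg (by omega), dif_neg (by omega)] at h
        exact sym2_out_ne _ (G.loopless e) (Sum.inl_injective h)
    · rw [dif_neg h0, dif_pos hj] at h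
      by_cases h1 : j.val + 1 < k
      · rw [dif_neg (by omega), dif_pos h1] at h
        have h3 := Sum.inr_injective h
        rw [Prod.mk.injEq] at h3
        have h2 : j.val - 1 = j.val + 1 - 1 := congrArg Fin.val h3.2
        omega
      · rw [dif_neg (by omega), dif_neg (by omega)] at h
        exact absurd h (by simp)

/-- The set of edges of the subdivision `G̃` of `G` arising from the subdivision of
an edge in `F`. -/
def subdivF (G : MGraph) (k : ℕ) (F : Set G.E) : Set (G.subdivide k).E :=
  {p | p.1 ∈ F}

/-- The graph `G^{×ē}` obtained from `G` by successively crossing `e 0` with `e 1`,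
`e 2` with `e 3`, …, `e (2l-2)` with `e (2l-1)` (for pairwise distinct edges
`e 0, …, e (2l-1)`): the crossed edges are deleted, `l` new vertices are added (one
for each pair), and each new vertex is joined by four new edges to the endpoints of
the two edges of its pair. -/
def multiCross (G : MGraph) (l : ℕ) (e : Fin (2 * l) → G.E) : MGraph where
  V := G.V ⊕ Fin l
  E := {f : G.E // ∀ i, f ≠ e i} ⊕ {p : Fin (2 * l) × G.V // p.2 ∈ G.ends (e p.1)}
  ends := fun f => match f with
    | .inl g => (G.ends g.val).map Sum.inl
    | .inr p => s(Sum.inl p.val.2,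
        (Sum.inr ⟨p.val.1.val / 2, by have := p.val.1.isLt; omega⟩ : G.V ⊕ Fin l))
  loopless := by
    rintro (g | p) h
    · exact G.loopless g.val ((Sym2.isDiag_map Sum.inl_injective).mp h)
    · rw [Sym2.mk_isDiag_iff] at h
      exact absurd h (by simp)

end MGraph
/-! ### Auxiliary construction for the crossing-removal lemma -/

lemma crossDrawing_exists {G : MGraph} (Δ : Drawing G) (e₁ e₂ : G.E) (hne : e₁ ≠ e₂)
    (x : ℝ × ℝ) (hx : Δ.IsCrossing x) (hx1 : x ∈ Δ.arc e₁) (hx2 : x ∈ Δ.arc e₂) :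
    ∃ Δ' : Drawing (G.crossAt e₁ e₂),
      Δ'.crossings ⊆ Δ.crossings \ {x} ∧
      ∀ g : {e : G.E // e ≠ e₁ ∧ e ≠ e₂}, Δ'.arc (Sum.inl g) = Δ.arc g.val := by
  classical
  have hxv : x ∉ Set.range Δ.vpos := hx.1
  set ed : Fin 2 → G.E := fun i => if i = 0 then e₁ else e₂ with hed
  have hedif : ∀ i : Fin 2, ed i = if i = 0 then e₁ else e₂ := fun i => by rw [hed]
  have hed0 : ed 0 = e₁ := by rw [hedif]; simp
  have hedn : ∀ i : Fin 2, i ≠ 0 → ed i = e₂ := by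
    intro i hi; rw [hedif, if_neg hi]
  have hedor : ∀ i : Fin 2, ed i = e₁ ∨ ed i = e₂ := by
    intro i
    by_cases h : i = 0
    · subst h; exact Or.inl hed0
    · exact Or.inr (hedn i h)
  have hedne : ∀ i j : Fin 2, i ≠ j → ed i ≠ ed j := by
    intro i j hij
    by_cases hi : i = 0
    · subst hi
      rw [hed0, hedn j (fun h => hij h.symm)]
      exact hne
    · by_cases hj : j = 0
      · subst hj
        rw [hed0, hedn i hi]
        exact hne.symm
      · exfalso; apply hij; omega
  have hq2 : ∀ (i : Fin 2) (v : G.V), v ∈ G.ends (if i = 0 then e₁ else e₂) →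
      v ∈ G.ends (ed i) := fun i v h => by rw [hedif]; exact h
  have hxarc : ∀ i : Fin 2, x ∈ Δ.par (ed i) '' Set.Icc 0 1 := by
    intro i
    rcases hedor i with h | h <;> rw [h]
    · exact hx1
    · exact hx2
  have hpar : ∀ i : Fin 2, ∃ τ : ℝ, τ ∈ Set.Ioo (0:ℝ) 1 ∧ Δ.par (ed i) τ = x := by
    intro i
    obtain ⟨τ, hτ, hτx⟩ := hxarc i
    obtain ⟨v, w, hvw, h0, h1⟩ := Δ.ends_match (ed i)
    refine ⟨τ, ⟨?_, ?_⟩, hτx⟩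
    · rcases eq_or_lt_of_le hτ.1 with h | h
      · exfalso; exact hxv ⟨v, by rw [← h0, h]; exact hτx⟩
      · exact h
    · rcases eq_or_lt_of_le hτ.2 with h | h
      · exfalso; exact hxv ⟨w, by rw [← h1, ← h]; exact hτx⟩
      · exact h
  choose t ht hpt using hpar
  have ht0 : ∀ i, 0 < t i := fun i => (ht i).1
  have ht1 : ∀ i, t i < 1 := fun i => (ht i).2
  set φ : Fin 2 × G.V → ℝ → ℝ :=
    fun p s => if Δ.par (ed p.1) 0 = Δ.vpos p.2 then s * t p.1
      else 1 - s * (1 - t p.1) with hφ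
  have hφcont : ∀ p, Continuous (φ p) := by
    intro p; rw [hφ]; dsimp only; split_ifs <;> fun_prop
  have hφinj : ∀ p, Function.Injective (φ p) := by
    intro p; rw [hφ]; dsimp only; split_ifs with h
    · intro a b hab
      exact mul_right_cancel₀ (ne_of_gt (ht0 p.1)) hab
    · intro a b hab
      have hab' : 1 - a * (1 - t p.1) = 1 - b * (1 - t p.1) := hab
      have h2 : (1 - t p.1) ≠ 0 := ne_of_gt (by linarith [ht1 p.1])
      exact mul_right_cancel₀ h2 (by linarith)
  have hφ1 : ∀ p, φ p 1 = t p.1 := by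
    intro p; rw [hφ]; dsimp only; split_ifs <;> ring
  have hφx : ∀ p, Δ.par (ed p.1) (φ p 1) = x := by
    intro p; rw [hφ1]; exact hpt p.1
  have hφ0A : ∀ p, Δ.par (ed p.1) 0 = Δ.vpos p.2 → φ p 0 = 0 := by
    intro p hA; rw [hφ]; dsimp only; rw [if_pos hA]; ring
  have hφ0B : ∀ p, ¬(Δ.par (ed p.1) 0 = Δ.vpos p.2) → φ p 0 = 1 := by
    intro p hA; rw [hφ]; dsimp only; rw [if_neg hA]; ring
  have hφIccA : ∀ p, Δ.par (ed p.1) 0 = Δ.vpos p.2 →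
      Set.MapsTo (φ p) (Set.Icc 0 1) (Set.Icc 0 (t p.1)) := by
    intro p hA s hs
    rw [hφ]; dsimp only; rw [if_pos hA]
    exact ⟨mul_nonneg hs.1 (le_of_lt (ht0 p.1)), by nlinarith [hs.2, ht0 p.1]⟩
  have hφIccB : ∀ p, ¬(Δ.par (ed p.1) 0 = Δ.vpos p.2) →
      Set.MapsTo (φ p) (Set.Icc 0 1) (Set.Icc (t p.1) 1) := by
    intro p hA s hs
    rw [hφ]; dsimp only; rw [if_neg hA]
    exact ⟨by nlinarith [hs.2, ht1 p.1], by nlinarith [hs.1, ht1 p.1]⟩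
  have hφIcc : ∀ p, Set.MapsTo (φ p) (Set.Icc 0 1) (Set.Icc 0 1) := by
    intro p
    by_cases hA : Δ.par (ed p.1) 0 = Δ.vpos p.2
    · exact (hφIccA p hA).mono_right (Set.Icc_subset_Icc_right (le_of_lt (ht1 p.1)))
    · exact (hφIccB p hA).mono_right (Set.Icc_subset_Icc_left (le_of_lt (ht0 p.1)))
  have hφIoo : ∀ p, Set.MapsTo (φ p) (Set.Ioo 0 1) (Set.Ioo 0 1) := by
    intro p s hs
    rw [hφ]; dsimp only; split_ifs with hA
    · exact ⟨mul_pos hs.1 (ht0 p.1), by nlinarith [hs.2, ht1 p.1, ht0 p.1]⟩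
    · exact ⟨by nlinarith [hs.2, ht1 p.1, ht0 p.1], by nlinarith [hs.1, ht1 p.1, ht0 p.1]⟩
  have hBend : ∀ p : Fin 2 × G.V, p.2 ∈ G.ends (ed p.1) →
      ¬(Δ.par (ed p.1) 0 = Δ.vpos p.2) → Δ.par (ed p.1) 1 = Δ.vpos p.2 := by
    intro p hp hA
    obtain ⟨v, w, hvw, h0, h1⟩ := Δ.ends_match (ed p.1)
    rw [hvw, Sym2.mem_iff] at hp
    rcases hp with rfl | rfl
    · exact absurd h0 hA
    · exact h1
  have hnotin : ∀ g : G.E, g ≠ e₁ → g ≠ e₂ → x ∉ Δ.par g '' Set.Icc 0 1 := by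
    intro g hg1 hg2 hxg
    rcases Δ.at_most_two x hxv e₁ e₂ g hx1 hx2 hxg with h | h | h
    · exact hne h
    · exact hg1 h.symm
    · exact hg2 h.symm
  have hsame' : ∀ p q : Fin 2 × G.V, p.1 = q.1 →
      Δ.par (ed p.1) 0 = Δ.vpos p.2 → ¬(Δ.par (ed q.1) 0 = Δ.vpos q.2) →
      ∀ y, y ∈ (fun s => Δ.par (ed p.1) (φ p s)) '' Set.Icc 0 1 →
        y ∈ (fun s => Δ.par (ed q.1) (φ q s)) '' Set.Icc 0 1 → y = x := by
    rintro p q h1 hAp hAq y ⟨a, ha, hay⟩ ⟨b, hb, hby⟩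
    have hq : ed q.1 = ed p.1 := by rw [h1]
    have htq : t q.1 = t p.1 := by rw [h1]
    have hma := hφIccA p hAp ha
    have hmb := hφIccB q hAq hb
    rw [htq] at hmb
    rw [hq] at hby
    have hab : φ p a = φ q b := Δ.par_inj (ed p.1)
      (Set.Icc_subset_Icc_right (le_of_lt (ht1 p.1)) hma)
      (Set.Icc_subset_Icc_left (le_of_lt (ht0 p.1)) hmb)
      (hay.trans hby.symm)
    have hta : φ p a = t p.1 := le_antisymm hma.2 (hab ▸ hmb.1)
    rw [← hay]
    show Δ.par (ed p.1) (φ p a) = x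
    rw [hta]
    exact hpt p.1
  have hsame : ∀ p q : Fin 2 × G.V, p.1 = q.1 →
      p.2 ∈ G.ends (ed p.1) → q.2 ∈ G.ends (ed q.1) → p.2 ≠ q.2 →
      ∀ y, y ∈ (fun s => Δ.par (ed p.1) (φ p s)) '' Set.Icc 0 1 →
        y ∈ (fun s => Δ.par (ed q.1) (φ q s)) '' Set.Icc 0 1 → y = x := by
    intro p q h1 hp hq hpq y hyp hyq
    by_cases hAp : Δ.par (ed p.1) 0 = Δ.vpos p.2
    · by_cases hAq : Δ.par (ed q.1) 0 = Δ.vpos q.2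
      · exfalso
        apply hpq
        apply Δ.vpos_inj
        rw [← hAp, ← hAq, h1]
      · exact hsame' p q h1 hAp hAq y hyp hyq
    · by_cases hAq : Δ.par (ed q.1) 0 = Δ.vpos q.2
      · exact hsame' q p h1.symm hAq hAp y hyq hyp
      · exfalso
        apply hpq
        apply Δ.vpos_inj
        rw [← hBend p hp hAp, ← hBend q hq hAq, h1]
  have hkey2 : ∀ p q : Fin 2 × G.V, p.2 ∈ G.ends (ed p.1) → q.2 ∈ G.ends (ed q.1) →
      ed p.1 = ed q.1 → ∀ y : ℝ × ℝ, y ≠ x →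
      y ∈ (fun s => Δ.par (ed p.1) (φ p s)) '' Set.Icc 0 1 →
      y ∈ (fun s => Δ.par (ed q.1) (φ q s)) '' Set.Icc 0 1 → p = q := by
    intro p q hp hq hedpq y hyx hyp hyq
    have h1 : p.1 = q.1 := by
      by_contra h
      exact (hedne _ _ h) hedpq
    by_cases h2 : p.2 = q.2
    · exact Prod.ext h1 h2
    · exact absurd (hsame p q h1 hp hq h2 y hyp hyq) hyx
  have hvert : ∀ p : Fin 2 × G.V, p.2 ∈ G.ends (ed p.1) → ∀ v : G.V,
      Δ.vpos v ∈ (fun s => Δ.par (ed p.1) (φ p s)) '' Set.Icc 0 1 → v = p.2 := by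
    rintro p hp v ⟨a, ha, hav⟩
    have hav' : Δ.par (ed p.1) (φ p a) = Δ.vpos v := hav
    have hmem : Δ.vpos v ∈ Δ.par (ed p.1) '' Set.Icc 0 1 := ⟨φ p a, hφIcc p ha, hav⟩
    have hv : v ∈ G.ends (ed p.1) := Δ.vertex_on_arc _ v hmem
    obtain ⟨w₁, w₂, hvw, h0, h1⟩ := Δ.ends_match (ed p.1)
    have hinj := Δ.par_inj (ed p.1)
    by_cases hAp : Δ.par (ed p.1) 0 = Δ.vpos p.2
    · have hle : φ p a ≤ t p.1 := (hφIccA p hAp ha).2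
      have key : Δ.vpos v = Δ.par (ed p.1) 0 := by
        rw [hvw, Sym2.mem_iff] at hv
        rcases hv with rfl | rfl
        · exact h0.symm
        · exfalso
          have h1a : (1:ℝ) = φ p a :=
            hinj (Set.right_mem_Icc.mpr zero_le_one) (hφIcc p ha) (h1.trans hav'.symm)
          linarith [ht1 p.1]
      exact Δ.vpos_inj (key.trans hAp)
    · have hge : t p.1 ≤ φ p a := (hφIccB p hAp ha).1
      have key : Δ.vpos v = Δ.par (ed p.1) 1 := by
        rw [hvw, Sym2.mem_iff] at hv
        rcases hv with rfl | rfl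
        · exfalso
          have h0a : (0:ℝ) = φ p a :=
            hinj (Set.left_mem_Icc.mpr zero_le_one) (hφIcc p ha) (h0.trans hav'.symm)
          linarith [ht0 p.1]
        · exact h1.symm
      exact Δ.vpos_inj (key.trans (hBend p hp hAp))
  -- the data of the new drawing
  set vpos' : (G.crossAt e₁ e₂).V → ℝ × ℝ := Sum.elim Δ.vpos (fun _ => x) with hvpos'
  set par' : (G.crossAt e₁ e₂).E → ℝ → ℝ × ℝ := fun f => match f with
    | .inl g => Δ.par g.val
    | .inr q => fun s => Δ.par (ed q.val.1) (φ q.val s) with hpar'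
  set uE : (G.crossAt e₁ e₂).E → G.E := fun f => match f with
    | .inl g => g.val
    | .inr q => ed q.val.1 with huE
  have hparl : ∀ g, par' (Sum.inl g) = Δ.par g.val := fun g => by rw [hpar']
  have hparr : ∀ q, par' (Sum.inr q) = fun s => Δ.par (ed q.val.1) (φ q.val s) :=
    fun q => by rw [hpar']
  have huEl : ∀ g, uE (Sum.inl g) = g.val := fun g => by rw [huE]
  have huEr : ∀ q, uE (Sum.inr q) = ed q.val.1 := fun q => by rw [huE]
  have hedval : ∀ (g : {e : G.E // e ≠ e₁ ∧ e ≠ e₂})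
      (q : {p : Fin 2 × G.V // p.2 ∈ G.ends (if p.1 = 0 then e₁ else e₂)}),
      g.val ≠ ed q.val.1 := by
    intro g q
    rcases hedor q.val.1 with h | h <;> rw [h]
    · exact g.2.1
    · exact g.2.2
  have hsub_Icc : ∀ f : (G.crossAt e₁ e₂).E, ∀ y : ℝ × ℝ,
      y ∈ par' f '' Set.Icc 0 1 → y ∈ Δ.par (uE f) '' Set.Icc 0 1 := by
    rintro (g | q) y hy
    · rw [hparl] at hy; rw [huEl]; exact hy
    · rw [hparr] at hy; rw [huEr]
      obtain ⟨a, ha, rfl⟩ := hy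
      exact ⟨φ q.val a, hφIcc q.val ha, rfl⟩
  have hsub_Ioo : ∀ f : (G.crossAt e₁ e₂).E, ∀ y : ℝ × ℝ,
      y ∈ par' f '' Set.Ioo 0 1 → y ∈ Δ.par (uE f) '' Set.Ioo 0 1 := by
    rintro (g | q) y hy
    · rw [hparl] at hy; rw [huEl]; exact hy
    · rw [hparr] at hy; rw [huEr]
      obtain ⟨a, ha, rfl⟩ := hy
      exact ⟨φ q.val a, hφIoo q.val ha, rfl⟩
  have hfeq : ∀ f f' : (G.crossAt e₁ e₂).E, ∀ y : ℝ × ℝ, y ≠ x → uE f = uE f' →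
      y ∈ par' f '' Set.Icc 0 1 → y ∈ par' f' '' Set.Icc 0 1 → f = f' := by
    rintro (g | q) (g' | q') y hyx hu hyf hyf'
    · rw [huEl, huEl] at hu
      exact congrArg Sum.inl (Subtype.ext hu)
    · rw [huEl, huEr] at hu
      exact absurd hu (hedval g q')
    · rw [huEr, huEl] at hu
      exact absurd hu.symm (hedval g' q)
    · rw [huEr, huEr] at hu
      rw [hparr] at hyf hyf'
      exact congrArg Sum.inr (Subtype.ext
        (hkey2 q.val q'.val (hq2 _ _ q.2) (hq2 _ _ q'.2) hu y hyx hyf hyf'))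
  refine ⟨{
      vpos := vpos'
      par := par'
      par_cont := ?_
      par_inj := ?_
      ends_match := ?_
      vpos_inj := ?_
      arcs_inter := ?_
      vertex_on_arc := ?_
      at_most_two := ?_ }, ?_, ?_⟩
  · -- par_cont
    rintro (g | q)
    · rw [hparl]; exact Δ.par_cont g.val
    · rw [hparr]
      exact (Δ.par_cont (ed q.val.1)).comp (hφcont q.val).continuousOn (hφIcc q.val)
  · -- par_inj
    rintro (g | q)
    · rw [hparl]; exact Δ.par_inj g.val
    · rw [hparr]
      intro a ha b hb hab
      exact hφinj q.val (Δ.par_inj (ed q.val.1) (hφIcc q.val ha) (hφIcc q.val hb) hab)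
  · -- ends_match
    rintro (g | q)
    · obtain ⟨v, w, hvw, h0, h1⟩ := Δ.ends_match g.val
      refine ⟨Sum.inl v, Sum.inl w, ?_, ?_, ?_⟩
      · show (G.ends g.val).map Sum.inl = _
        rw [hvw, Sym2.map_pair_eq]
        rfl
      · rw [hparl]; exact h0
      · rw [hparl]; exact h1
    · refine ⟨Sum.inl q.val.2, Sum.inr (), rfl, ?_, ?_⟩
      · rw [hparr]
        show Δ.par (ed q.val.1) (φ q.val 0) = Δ.vpos q.val.2
        by_cases hA : Δ.par (ed q.val.1) 0 = Δ.vpos q.val.2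
        · rw [hφ0A _ hA]; exact hA
        · rw [hφ0B _ hA]
          exact hBend q.val (hq2 _ _ q.2) hA
      · rw [hparr]
        show Δ.par (ed q.val.1) (φ q.val 1) = x
        exact hφx q.val
  · -- vpos_inj
    rintro (v | v) (w | w) h
    · exact congrArg Sum.inl (Δ.vpos_inj h)
    · exact absurd ⟨v, h⟩ hxv
    · exact absurd ⟨w, h.symm⟩ hxv
    · exact congrArg Sum.inr (Subsingleton.elim v w)
  · -- arcs_inter
    rintro (g | p) (g' | q) hfne
    · rw [hparl, hparl]
      exact Δ.arcs_inter g.val g'.val (fun h => hfne (congrArg Sum.inl (Subtype.ext h)))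
    · have hgne : g.val ≠ ed q.val.1 := hedval g q
      intro y hy z hz
      have hy1 : y ∈ Δ.par g.val '' Set.Ioo 0 1 := by
        rw [hparl] at hy; exact hy.1
      have hy2 : y ∈ Δ.par (ed q.val.1) '' Set.Ioo 0 1 := by
        have := hsub_Ioo (Sum.inr q) y hy.2
        rwa [huEr] at this
      have hz1 : z ∈ Δ.par g.val '' Set.Ioo 0 1 := by
        rw [hparl] at hz; exact hz.1
      have hz2 : z ∈ Δ.par (ed q.val.1) '' Set.Ioo 0 1 := by
        have := hsub_Ioo (Sum.inr q) z hz.2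
        rwa [huEr] at this
      exact Δ.arcs_inter g.val (ed q.val.1) hgne ⟨hy1, hy2⟩ ⟨hz1, hz2⟩
    · have hgne : g'.val ≠ ed p.val.1 := hedval g' p
      intro y hy z hz
      have hy1 : y ∈ Δ.par g'.val '' Set.Ioo 0 1 := by
        rw [hparl] at hy; exact hy.2
      have hy2 : y ∈ Δ.par (ed p.val.1) '' Set.Ioo 0 1 := by
        have := hsub_Ioo (Sum.inr p) y hy.1
        rwa [huEr] at this
      have hz1 : z ∈ Δ.par g'.val '' Set.Ioo 0 1 := by
        rw [hparl] at hz; exact hz.2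
      have hz2 : z ∈ Δ.par (ed p.val.1) '' Set.Ioo 0 1 := by
        have := hsub_Ioo (Sum.inr p) z hz.1
        rwa [huEr] at this
      exact Δ.arcs_inter g'.val (ed p.val.1) hgne ⟨hy1, hy2⟩ ⟨hz1, hz2⟩
    · by_cases hpq : p.val.1 = q.val.1
      · have hv : p.val.2 ≠ q.val.2 := by
          intro h
          exact hfne (congrArg Sum.inr (Subtype.ext (Prod.ext hpq h)))
        intro y hy z hz
        rw [hparr, hparr] at hy hz
        have hyx : y = x := hsame p.val q.val hpq (hq2 _ _ p.2) (hq2 _ _ q.2) hv y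
          (Set.image_mono Set.Ioo_subset_Icc_self hy.1)
          (Set.image_mono Set.Ioo_subset_Icc_self hy.2)
        have hzx : z = x := hsame p.val q.val hpq (hq2 _ _ p.2) (hq2 _ _ q.2) hv z
          (Set.image_mono Set.Ioo_subset_Icc_self hz.1)
          (Set.image_mono Set.Ioo_subset_Icc_self hz.2)
        rw [hyx, hzx]
      · have hεne : ed p.val.1 ≠ ed q.val.1 := hedne _ _ hpq
        intro y hy z hz
        have hy1 := hsub_Ioo (Sum.inr p) y hy.1
        have hy2 := hsub_Ioo (Sum.inr q) y hy.2
        have hz1 := hsub_Ioo (Sum.inr p) z hz.1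
        have hz2 := hsub_Ioo (Sum.inr q) z hz.2
        rw [huEr] at hy1 hz1
        rw [huEr] at hy2 hz2
        exact Δ.arcs_inter (ed p.val.1) (ed q.val.1) hεne ⟨hy1, hy2⟩ ⟨hz1, hz2⟩
  · -- vertex_on_arc
    rintro (g | q) (v | v) hv
    · show Sum.inl v ∈ (G.ends g.val).map Sum.inl
      rw [hparl] at hv
      exact Sym2.mem_map.mpr ⟨v, Δ.vertex_on_arc g.val v hv, rfl⟩
    · rw [hparl] at hv
      exact absurd hv (hnotin g.val g.2.1 g.2.2)
    · show Sum.inl v ∈ s(Sum.inl q.val.2, (Sum.inr () : G.V ⊕ Unit))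
      rw [hparr] at hv
      have : v = q.val.2 := hvert q.val (hq2 _ _ q.2) v hv
      rw [this]
      exact Sym2.mem_mk_left _ _
    · show Sum.inr v ∈ s(Sum.inl q.val.2, (Sum.inr () : G.V ⊕ Unit))
      have : v = () := rfl
      rw [this]
      exact Sym2.mem_mk_right _ _
  · -- at_most_two
    intro y hy g₁ g₂ g₃ h₁ h₂ h₃
    have hyV : y ∉ Set.range Δ.vpos := by
      rintro ⟨v, hv⟩
      exact hy ⟨Sum.inl v, hv⟩
    have hyx : y ≠ x := by
      rintro rfl
      exact hy ⟨Sum.inr (), rfl⟩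
    rcases Δ.at_most_two y hyV (uE g₁) (uE g₂) (uE g₃)
      (hsub_Icc g₁ y h₁) (hsub_Icc g₂ y h₂) (hsub_Icc g₃ y h₃) with h | h | h
    · exact Or.inl (hfeq _ _ y hyx h h₁ h₂)
    · exact Or.inr (Or.inl (hfeq _ _ y hyx h h₁ h₃))
    · exact Or.inr (Or.inr (hfeq _ _ y hyx h h₂ h₃))
  · -- crossings subset
    rintro y ⟨hyv, f, f', hff', hyf, hyf'⟩
    have hyV : y ∉ Set.range Δ.vpos := by
      rintro ⟨v, hv⟩
      exact hyv ⟨Sum.inl v, hv⟩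
    have hyx : y ≠ x := by
      rintro rfl
      exact hyv ⟨Sum.inr (), rfl⟩
    refine ⟨⟨hyV, uE f, uE f', ?_, hsub_Icc f y hyf, hsub_Icc f' y hyf'⟩, hyx⟩
    intro hu
    exact hff' (hfeq f f' y hyx hu hyf hyf')
  · -- arcs of old edges unchanged
    intro g
    show par' (Sum.inl g) '' Set.Icc 0 1 = Δ.par g.val '' Set.Icc 0 1
    rw [hparl]

lemma crossAt_part1 (G : MGraph) (F : Set G.E) :
    ∀ Δ : Drawing G, (∀ e ∈ F, ¬ Δ.Involved e) → Δ.crossings.Finite →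
      ∀ (x : ℝ × ℝ) (e₁ e₂ : G.E), e₁ ≠ e₂ → Δ.IsCrossing x →
        x ∈ Δ.arc e₁ → x ∈ Δ.arc e₂ →
        e₁ ∉ F ∧ e₂ ∉ F ∧
        ∃ Δ' : Drawing (G.crossAt e₁ e₂),
          Δ'.CrossingsAtMost (Δ.crossings.ncard - 1) ∧
          ∀ f ∈ G.liftF e₁ e₂ F, ¬ Δ'.Involved f := by
  intro Δ hF hfin x e₁ e₂ hne hx hx1 hx2
  obtain ⟨Δ', hsub, harc⟩ := crossDrawing_exists Δ e₁ e₂ hne x hx hx1 hx2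
  have hxmem : x ∈ Δ.crossings := hx
  refine ⟨fun h => hF e₁ h ⟨x, hx, hx1⟩, fun h => hF e₂ h ⟨x, hx, hx2⟩, Δ', ⟨?_, ?_⟩, ?_⟩
  · exact hfin.subset (hsub.trans Set.diff_subset)
  · calc Δ'.crossings.ncard ≤ (Δ.crossings \ {x}).ncard :=
        Set.ncard_le_ncard hsub hfin.diff
      _ = Δ.crossings.ncard - 1 := Set.ncard_diff_singleton_of_mem hxmem
  · rintro f ⟨g, rfl, hgF⟩ ⟨y, hyc, hyarc⟩
    have hy' := hsub hyc
    rw [harc g] at hyarc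
    exact hF g.val hgF ⟨y, hy'.1, hyarc⟩

/-- If `Δ` is a drawing of `G` in which no forbidden edge is involved in a crossing
and `x ∈ Δ(e₁) ∩ Δ(e₂)` is a crossing of `Δ`, then `e₁, e₂ ∉ F` and the graph
`G^{e₁×e₂}` has a drawing with fewer crossings keeping all forbidden edges crossing-free.
In particular, if `G` has an `l`-good drawing (`l ≥ 1`) with respect to `F` that has
at least one crossing, then for some distinct edges `e₁, e₂ ∈ E^G ∖ F` the graph
`G^{e₁×e₂}` has an `(l-1)`-good drawing with respect to `F`. -/
theorem crossAt_of_crossing (G : MGraph) (F : Set G.E) :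
    (∀ Δ : Drawing G, (∀ e ∈ F, ¬ Δ.Involved e) → Δ.crossings.Finite →
      ∀ (x : ℝ × ℝ) (e₁ e₂ : G.E), e₁ ≠ e₂ → Δ.IsCrossing x →
        x ∈ Δ.arc e₁ → x ∈ Δ.arc e₂ →
        e₁ ∉ F ∧ e₂ ∉ F ∧
        ∃ Δ' : Drawing (G.crossAt e₁ e₂),
          Δ'.CrossingsAtMost (Δ.crossings.ncard - 1) ∧
          ∀ f ∈ G.liftF e₁ e₂ F, ¬ Δ'.Involved f) ∧
    ∀ l : ℕ, 1 ≤ l → ∀ Δ : Drawing G, Δ.IsGood l F → Δ.crossings.Nonempty →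
      ∃ e₁ e₂ : G.E, e₁ ≠ e₂ ∧ e₁ ∉ F ∧ e₂ ∉ F ∧
        ∃ Δ' : Drawing (G.crossAt e₁ e₂), Δ'.IsGood (l - 1) (G.liftF e₁ e₂ F) := by
  refine ⟨crossAt_part1 G F, ?_⟩
  intro l hl Δ hgood hnonempty
  obtain ⟨x, hxc⟩ := hnonempty
  have hxc' : Δ.IsCrossing x := hxc
  obtain ⟨hxv, e₁, e₂, h12, hxe₁, hxe₂⟩ := hxc'
  obtain ⟨he₁, he₂, Δ', ⟨hfin', hcard⟩, hforb⟩ :=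
    crossAt_part1 G F Δ hgood.2 hgood.1.1 x e₁ e₂ h12 hxc hxe₁ hxe₂
  refine ⟨e₁, e₂, h12, he₁, he₂, Δ', ⟨hfin', ?_⟩, hforb⟩
  have h1 : 0 < Δ.crossings.ncard := (Set.ncard_pos hgood.1.1).mpr ⟨x, hxc⟩
  have h2 := hgood.1.2
  omega
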